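/- Let T be a tree with k vertices and Δ = Δ(T) ≥ 3. Let H be a Δ-uniform hypergraph, let w = k^{3k}, let B > w, and let C > 2·max(B·|V(H)|, k). Let H' be the B-blowup of H with each hyperedge duplicated C times, and let G be the vertex–hyperedge incidence graph of H'. Then τ(H) · (B − w) ≤ τ_T(G) ≤ τ(H) · B, where τ(H) is the minimum size of a vertex cover of H and τ_T(G) is the minimum size of a T-transversal of G. -/

import Mathlib

/-- The vertex–hyperedge incidence graph of a membership relation `mem : α → β → Prop`:
the bipartite graph on `α ⊕ β` in which `Sum.inl a` is adjacent to `Sum.inr b`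
iff `mem a b`. -/
def incidenceGraph {α β : Type*} (mem : α → β → Prop) : SimpleGraph (α ⊕ β) where
  Adj x y := (∃ a b, x = Sum.inl a ∧ y = Sum.inr b ∧ mem a b) ∨
             (∃ a b, x = Sum.inr b ∧ y = Sum.inl a ∧ mem a b)
  symm := by
    constructor
    rintro x y (⟨a, b, rfl, rfl, h⟩ | ⟨a, b, rfl, rfl, h⟩)
    · exact Or.inr ⟨a, b, rfl, rfl, h⟩
    · exact Or.inl ⟨a, b, rfl, rfl, h⟩
  loopless := by
    constructor
    rintro x (⟨a, b, h1, h2, -⟩ | ⟨a, b, h1, h2, -⟩) <;> simp_all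

/-- `S` is a `T`-transversal of `G`: every copy of `T` in `G` (i.e. every injective graph
homomorphism from `T` to `G`) meets `S`. -/
def IsTTransversal {α β : Type*} (T : SimpleGraph α) (G : SimpleGraph β) (S : Set β) : Prop :=
  ∀ f : α → β, Function.Injective f → (∀ u v, T.Adj u v → G.Adj (f u) (f v)) →
    ∃ u, f u ∈ S


/-! ### Auxiliary lemmas -/

open SimpleGraph in
lemma tree_exists_leaf {α : Type*} [Fintype α] {T : SimpleGraph α} [DecidableRel T.Adj]
    (ht : T.IsTree) (h2 : 2 ≤ Fintype.card α) : ∃ ℓ, T.degree ℓ = 1 := by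
  by_contra h
  push_neg at h
  have hdeg : ∀ v, 2 ≤ T.degree v := by
    intro v
    have h1 : 0 < T.degree v := by
      rw [T.degree_pos_iff_exists_adj v]
      obtain ⟨u, hu⟩ := Fintype.exists_ne_of_one_lt_card h2 v
      obtain ⟨w⟩ := ht.isConnected.preconnected v u
      cases w with
      | nil => exact absurd rfl hu.symm
      | cons hadj _ => exact ⟨_, hadj⟩
    have := h v
    omega
  have hsum := T.sum_degrees_eq_twice_card_edges
  have hedge := ht.card_edgeFinset
  have : 2 * Fintype.card α ≤ ∑ v, T.degree v := by
    calc 2 * Fintype.card α = ∑ _v : α, 2 := by simp [mul_comm]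
    _ ≤ ∑ v, T.degree v := Finset.sum_le_sum fun v _ => hdeg v
  omega

open SimpleGraph in
lemma path_avoids_leaf {α : Type*} [Fintype α] {T : SimpleGraph α} [DecidableRel T.Adj]
    {ℓ : α} (hdeg : T.degree ℓ = 1) :
    ∀ {x y : α} (p : T.Walk x y), p.IsPath → x ≠ ℓ → y ≠ ℓ → ℓ ∉ p.support := by
  intro x y p
  induction p with
  | nil => intro _ hx _ hs; simp at hs; exact hx hs.symm
  | @cons x z y hadj q IH =>
    intro hp hx hy hs
    rw [SimpleGraph.Walk.support_cons, List.mem_cons] at hs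
    rcases hs with hs | hs
    · exact hx hs.symm
    · by_cases hz : z = ℓ
      · subst hz
        cases q with
        | nil => exact hy rfl
        | @cons _ z' _ hadj' q' =>
          have hxz' : x ≠ z' := by
            intro hxx
            have hnd := hp.2
            rw [SimpleGraph.Walk.support_cons, List.nodup_cons] at hnd
            exact hnd.1 (by rw [SimpleGraph.Walk.support_cons]; exact List.mem_cons_of_mem _ (hxx ▸ SimpleGraph.Walk.start_mem_support q'))
          have h2 : 1 < (T.neighborFinset z).card := by
            rw [Finset.one_lt_card]
            exact ⟨x, by simpa using hadj.symm, z', by simpa using hadj', hxz'⟩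
          rw [show (T.neighborFinset z).card = T.degree z from rfl, hdeg] at h2
          omega
      · exact IH hp.of_cons hz hy hs

open SimpleGraph in
lemma reachable_comap {α : Type*} {T : SimpleGraph α} {ℓ : α} :
    ∀ {x y : α} (p : T.Walk x y) (hx : x ≠ ℓ) (hy : y ≠ ℓ), ℓ ∉ p.support →
      (SimpleGraph.comap (Subtype.val : {a : α // a ≠ ℓ} → α) T).Reachable ⟨x, hx⟩ ⟨y, hy⟩ := by
  intro x y p
  induction p with
  | nil => intro hx hy _; rfl
  | @cons x z y hadj q IH =>
    intro hx hy hs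
    rw [SimpleGraph.Walk.support_cons, List.mem_cons] at hs
    push_neg at hs
    have hz : z ≠ ℓ := by
      intro h; exact hs.2 (h ▸ SimpleGraph.Walk.start_mem_support q)
    have h1 : (SimpleGraph.comap (Subtype.val : {a : α // a ≠ ℓ} → α) T).Adj ⟨x, hx⟩ ⟨z, hz⟩ := hadj
    exact (h1.reachable).trans (IH hz hy hs.2)

open SimpleGraph in
lemma comap_isTree {α : Type*} [Fintype α] {T : SimpleGraph α} [DecidableRel T.Adj]
    (ht : T.IsTree) {ℓ : α} (hdeg : T.degree ℓ = 1) (h2 : 2 ≤ Fintype.card α) :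
    (SimpleGraph.comap (Subtype.val : {a : α // a ≠ ℓ} → α) T).IsTree := by
  classical
  haveI hne : Nonempty {a : α // a ≠ ℓ} := by
    obtain ⟨u, hu⟩ := Fintype.exists_ne_of_one_lt_card h2 ℓ
    exact ⟨⟨u, hu⟩⟩
  constructor
  · constructor
    rintro ⟨x, hx⟩ ⟨y, hy⟩
    obtain ⟨w⟩ := ht.isConnected.preconnected x y
    have hp : (w.toPath : T.Walk x y).IsPath := w.toPath.2
    have := path_avoids_leaf hdeg (w.toPath : T.Walk x y) hp hx hy
    exact reachable_comap _ hx hy this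
  · intro v c hc
    have hinj : Function.Injective (Subtype.val : {a : α // a ≠ ℓ} → α) := Subtype.val_injective
    have := hc.map (f := SimpleGraph.Hom.comap Subtype.val T) hinj
    exact ht.IsAcyclic _ this

universe u v

open SimpleGraph in
lemma exists_good_assignment {V : Type v} [DecidableEq V] (Δ : ℕ) (e : Finset V) (hΔ : 0 < Δ)
    (he : Δ ≤ e.card) :
    ∀ (n : ℕ), ∀ (α : Type u) (T : SimpleGraph α), Finite α → Nat.card α = n → T.IsTree →
      ∀ (χ : α → Fin 2) (i₀ : Fin 2), (∀ u v, T.Adj u v → χ u ≠ χ v) →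
      (∀ u, χ u = i₀ → ∀ s : Finset α, (∀ x ∈ s, T.Adj u x) → s.card ≤ Δ) →
      ∃ ψ : α → V, (∀ x, ψ x ∈ e) ∧
        ∀ u x y, χ u = i₀ → T.Adj u x → T.Adj u y → ψ x = ψ y → x = y := by
  intro n
  induction n using Nat.strong_induction_on with
  | _ n IH =>
  intro α T hfin hcard htree χ i₀ hχ hdegb
  classical
  haveI := hfin
  haveI : Fintype α := Fintype.ofFinite α
  haveI : DecidableRel T.Adj := Classical.decRel _
  rw [Nat.card_eq_fintype_card] at hcard
  have hene : e.Nonempty := Finset.card_pos.1 (lt_of_lt_of_le hΔ he)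
  rcases le_or_gt (Fintype.card α) 1 with hsmall | hbig
  · obtain ⟨c, hc⟩ := hene
    exact ⟨fun _ => c, fun _ => hc, fun u x y _ _ _ _ =>
      Fintype.card_le_one_iff.1 hsmall x y⟩
  · obtain ⟨ℓ, hℓ⟩ := tree_exists_leaf htree hbig
    set α' := {a : α // a ≠ ℓ} with hα'
    set T' := SimpleGraph.comap (Subtype.val : α' → α) T with hT'
    have htree' := comap_isTree htree hℓ hbig
    have hcard' : Nat.card α' = n - 1 := by
      rw [Nat.card_eq_fintype_card]
      have h1 : Fintype.card {a : α // ¬ (a = ℓ)} = Fintype.card α - Fintype.card {a : α // a = ℓ} :=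
        Fintype.card_subtype_compl _
      rw [Fintype.card_subtype_eq] at h1
      rw [← hcard]
      exact h1
    have hlt : n - 1 < n := by omega
    obtain ⟨ψ', hψ'mem, hψ'inj⟩ := IH (n - 1) hlt α' T' inferInstance hcard' htree'
      (fun a => χ a.1) i₀
      (fun u v huv => hχ u.1 v.1 huv)
      (by
        intro u' hu' s' hs'
        have : s'.card = (s'.image Subtype.val).card :=
          (Finset.card_image_of_injective _ Subtype.val_injective).symm
        rw [this]
        apply hdegb u'.1 hu'
        intro x hx
        obtain ⟨x', hx', rfl⟩ := Finset.mem_image.1 hx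
        exact hs' x' hx')
    obtain ⟨p₀, hp₀⟩ := Finset.card_eq_one.1 (hℓ : (T.neighborFinset ℓ).card = 1)
    have hadjℓ : T.Adj ℓ p₀ := by
      have : p₀ ∈ T.neighborFinset ℓ := by rw [hp₀]; exact Finset.mem_singleton_self _
      simpa using this
    have hp₀ℓ : p₀ ≠ ℓ := fun h => T.loopless.irrefl ℓ (by rw [h] at hadjℓ; exact hadjℓ)
    set U : Finset V :=
      ((T.neighborFinset p₀).erase ℓ).attach.image
        (fun x => ψ' ⟨x.1, Finset.ne_of_mem_erase x.2⟩) with hU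
    obtain ⟨c, hce, hcU⟩ : ∃ c ∈ e, (χ p₀ = i₀ → c ∉ U) := by
      by_cases hχp : χ p₀ = i₀
      · have hdegp : (T.neighborFinset p₀).card ≤ Δ :=
          hdegb p₀ hχp _ (fun x hx => by simpa using hx)
        have hℓmem : ℓ ∈ T.neighborFinset p₀ := by simpa using hadjℓ.symm
        have hUcard : U.card < e.card := by
          have h1 : U.card ≤ ((T.neighborFinset p₀).erase ℓ).card := by
            refine le_trans Finset.card_image_le ?_
            rw [Finset.card_attach]
          rw [Finset.card_erase_of_mem hℓmem] at h1
          have : 1 ≤ (T.neighborFinset p₀).card := Finset.card_pos.2 ⟨ℓ, hℓmem⟩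
          omega
        by_contra hcon
        push_neg at hcon
        have : e ⊆ U := fun c hc => (hcon c hc).2
        exact absurd (Finset.card_le_card this) (by omega)
      · obtain ⟨c, hc⟩ := hene
        exact ⟨c, hc, fun h => absurd h hχp⟩
    refine ⟨fun a => if h : a = ℓ then c else ψ' ⟨a, h⟩, ?_, ?_⟩
    · intro x
      by_cases h : x = ℓ
      · simp only [dif_pos h]; exact hce
      · simp only [dif_neg h]; exact hψ'mem _
    · intro u x y hu hux huy heq
      dsimp only at heq
      by_cases huℓ : u = ℓ
      · subst huℓ
        have hx : x ∈ T.neighborFinset u := by simpa using hux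
        have hy : y ∈ T.neighborFinset u := by simpa using huy
        rw [hp₀, Finset.mem_singleton] at hx hy
        rw [hx, hy]
      · have hup : ∀ z, T.Adj u z → z = ℓ → u = p₀ := by
          intro z hadj hx
          have : u ∈ T.neighborFinset ℓ := by
            rw [hx] at hadj; simpa using hadj.symm
          rw [hp₀, Finset.mem_singleton] at this; exact this
        by_cases hxℓ : x = ℓ <;> by_cases hyℓ : y = ℓ
        · rw [hxℓ, hyℓ]
        · exfalso
          have hup₀ : u = p₀ := hup x hux hxℓ
          have hymem : y ∈ (T.neighborFinset p₀).erase ℓ := by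
            rw [Finset.mem_erase]
            exact ⟨hyℓ, by rw [← hup₀]; simpa using huy⟩
          have hyU : ψ' ⟨y, hyℓ⟩ ∈ U := by
            rw [hU]
            exact Finset.mem_image.2 ⟨⟨y, hymem⟩, Finset.mem_attach _ _, rfl⟩
          rw [dif_pos hxℓ, dif_neg hyℓ] at heq
          exact hcU (by rw [← hup₀]; exact hu) (heq ▸ hyU)
        · exfalso
          have hup₀ : u = p₀ := hup y huy hyℓ
          have hxmem : x ∈ (T.neighborFinset p₀).erase ℓ := by
            rw [Finset.mem_erase]
            exact ⟨hxℓ, by rw [← hup₀]; simpa using hux⟩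
          have hxU : ψ' ⟨x, hxℓ⟩ ∈ U := by
            rw [hU]
            exact Finset.mem_image.2 ⟨⟨x, hxmem⟩, Finset.mem_attach _ _, rfl⟩
          rw [dif_neg hxℓ, dif_pos hyℓ] at heq
          exact hcU (by rw [← hup₀]; exact hu) (heq.symm ▸ hxU)
        · rw [dif_neg hxℓ, dif_neg hyℓ] at heq
          have := hψ'inj ⟨u, huℓ⟩ ⟨x, hxℓ⟩ ⟨y, hyℓ⟩ hu hux huy heq
          exact congrArg Subtype.val this

lemma exists_injOn_finset {A B : Type*} [DecidableEq A] (hB : Nonempty B)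
    (s : Finset A) (t : Finset B) (h : s.card ≤ t.card) :
    ∃ f : A → B, (∀ x ∈ s, ∀ y ∈ s, f x = f y → x = y) ∧ ∀ x ∈ s, f x ∈ t := by
  classical
  rcases t.eq_empty_or_nonempty with rfl | ⟨t0, ht0⟩
  · have hs : s = ∅ := Finset.card_eq_zero.1 (le_antisymm (by simpa using h) (Nat.zero_le _))
    subst hs
    exact ⟨fun _ => Classical.choice hB, by simp, by simp⟩
  · have hcard : Fintype.card {x // x ∈ s} ≤ Fintype.card {y // y ∈ t} := by
      simpa [Fintype.card_coe] using h
    obtain ⟨g⟩ := Function.Embedding.nonempty_of_card_le hcard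
    refine ⟨fun a => if h : a ∈ s then (g ⟨a, h⟩).1 else t0, ?_, ?_⟩
    · intro x hx y hy hxy
      dsimp only at hxy
      rw [dif_pos hx, dif_pos hy] at hxy
      have := g.injective (Subtype.ext hxy)
      exact congrArg Subtype.val this
    · intro x hx; dsimp only; rw [dif_pos hx]; exact (g ⟨x, hx⟩).2

lemma incidenceGraph_adj {α β : Type*} (mem : α → β → Prop) (x y : α ⊕ β) :
    (incidenceGraph mem).Adj x y ↔
      (∃ a b, x = Sum.inl a ∧ y = Sum.inr b ∧ mem a b) ∨
      (∃ a b, x = Sum.inr b ∧ y = Sum.inl a ∧ mem a b) := Iff.rfl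

/-- Soundness: let `T` be a tree with `k` vertices and `Δ = Δ(T) ≥ 3` (where `Δ(T)` is computed
from a proper 2-coloring `χ` of `T`), let `H = (V, E)` be a `Δ`-uniform hypergraph,
`w = k^(3k)`, `B > w`, `C > 2·max(B·|V(H)|, k)`, and let `G` be the vertex–hyperedge incidence
graph of the `B`-blowup of `H` with each hyperedge duplicated `C` times.  Then
`τ(H) · (B - w) ≤ τ_T(G) ≤ τ(H) · B`. -/
theorem transversal_two_sided_bounds {α V : Type*} [Fintype α] [Fintype V] [DecidableEq V]
    (k Δ B C : ℕ) (hk : Fintype.card α = k)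
    (T : SimpleGraph α) [DecidableRel T.Adj] (htree : T.IsTree)
    (χ : α → Fin 2) (hχ : ∀ u v, T.Adj u v → χ u ≠ χ v)
    (hΔdef : Δ = min ((Finset.univ.filter fun v => χ v = 0).sup (fun v => T.degree v))
                     ((Finset.univ.filter fun v => χ v = 1).sup (fun v => T.degree v)))
    (hΔ3 : 3 ≤ Δ)
    (hB : k ^ (3 * k) < B) (hC : 2 * max (B * Fintype.card V) k < C)
    (E : Finset (Finset V)) (hunif : ∀ e ∈ E, e.card = Δ) :
    sInf {n : ℕ | ∃ S : Finset V, (∀ e ∈ E, ∃ v ∈ e, v ∈ S) ∧ S.card = n} * (B - k ^ (3 * k))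
      ≤ sInf {n : ℕ | ∃ S : Finset ((V × Fin B) ⊕
            ({e' : Finset (V × Fin B) // e'.card = Δ ∧ e'.image Prod.fst ∈ E} × Fin C)),
          IsTTransversal T
            (incidenceGraph (fun (p : V × Fin B)
                (ec : {e' : Finset (V × Fin B) // e'.card = Δ ∧ e'.image Prod.fst ∈ E} × Fin C)
                => p ∈ ec.1.val)) ↑S ∧ S.card = n}
    ∧ sInf {n : ℕ | ∃ S : Finset ((V × Fin B) ⊕
            ({e' : Finset (V × Fin B) // e'.card = Δ ∧ e'.image Prod.fst ∈ E} × Fin C)),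
          IsTTransversal T
            (incidenceGraph (fun (p : V × Fin B)
                (ec : {e' : Finset (V × Fin B) // e'.card = Δ ∧ e'.image Prod.fst ∈ E} × Fin C)
                => p ∈ ec.1.val)) ↑S ∧ S.card = n}
      ≤ sInf {n : ℕ | ∃ S : Finset V, (∀ e ∈ E, ∃ v ∈ e, v ∈ S) ∧ S.card = n} * B := by
  classical
  set w : ℕ := k ^ (3 * k) with hw
  have hαne : Nonempty α := htree.isConnected.nonempty
  have hk1 : 1 ≤ k := by rw [← hk]; exact Fintype.card_pos
  have hwk : k ≤ w := by
    rw [hw]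
    calc k = k ^ 1 := (pow_one k).symm
    _ ≤ k ^ (3 * k) := Nat.pow_le_pow_right hk1 (by omega)
  have hw1 : 1 ≤ w := le_trans hk1 hwk
  have hBpos : 0 < B := by omega
  have hCk : 2 * k < C := lt_of_le_of_lt (by
    have := le_max_right (B * Fintype.card V) k
    omega) hC
  have hCpos : 0 < C := by omega
  set Q := {e' : Finset (V × Fin B) // e'.card = Δ ∧ e'.image Prod.fst ∈ E} with hQ
  set G := incidenceGraph (fun (p : V × Fin B)
      (ec : {e' : Finset (V × Fin B) // e'.card = Δ ∧ e'.image Prod.fst ∈ E} × Fin C)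
      => p ∈ ec.1.val) with hG
  set τset : Set ℕ := {n : ℕ | ∃ S : Finset V, (∀ e ∈ E, ∃ v ∈ e, v ∈ S) ∧ S.card = n}
    with hτset
  have heNe : ∀ e ∈ E, e.Nonempty := by
    intro e he
    rw [← Finset.card_pos, hunif e he]; omega
  have hτne : τset.Nonempty := by
    refine ⟨(Finset.univ : Finset V).card, Finset.univ, ?_, rfl⟩
    intro e he
    obtain ⟨ve, hve⟩ := heNe e he
    exact ⟨ve, hve, Finset.mem_univ ve⟩
  obtain ⟨S₀, hS₀cov, hS₀card⟩ := Nat.sInf_mem hτne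
  -- degree facts
  have hsup0 : Δ ≤ (Finset.univ.filter fun v => χ v = 0).sup (fun v => T.degree v) := by
    rw [hΔdef]; exact min_le_left _ _
  have hsup1 : Δ ≤ (Finset.univ.filter fun v => χ v = 1).sup (fun v => T.degree v) := by
    rw [hΔdef]; exact min_le_right _ _
  rw [Finset.le_sup_iff (show (⊥ : ℕ) < Δ by simp; omega)] at hsup0 hsup1
  obtain ⟨u₀, hu₀m, hu₀d⟩ := hsup0
  obtain ⟨u₁, hu₁m, hu₁d⟩ := hsup1
  have hu₀χ : χ u₀ = 0 := (Finset.mem_filter.1 hu₀m).2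
  have hu₁χ : χ u₁ = 1 := (Finset.mem_filter.1 hu₁m).2
  constructor
  · -- LOWER BOUND
    refine le_csInf ?_ ?_
    · refine ⟨(Finset.univ : Finset ((V × Fin B) ⊕ Q × Fin C)).card, Finset.univ, ?_, rfl⟩
      intro f _ _
      exact ⟨Classical.arbitrary α, by simp⟩
    · rintro n ⟨S, hStrans, rfl⟩
      by_contra hcon
      push_neg at hcon
      have hτV : sInf τset ≤ Fintype.card V := by
        refine le_trans (Nat.sInf_le ?_) (le_of_eq (Finset.card_univ))
        refine ⟨Finset.univ, ?_, rfl⟩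
        intro e he
        obtain ⟨ve, hve⟩ := heNe e he
        exact ⟨ve, hve, Finset.mem_univ ve⟩
      have hSsmall : S.card + k < C := by
        have h1 : S.card < Fintype.card V * B :=
          lt_of_lt_of_le hcon (by
            calc sInf τset * (B - w) ≤ Fintype.card V * B :=
              Nat.mul_le_mul hτV (Nat.sub_le _ _))
        have h2 := le_max_left (B * Fintype.card V) k
        have h3 := le_max_right (B * Fintype.card V) k
        have h1' : S.card < B * Fintype.card V := by rwa [mul_comm] at h1
        omega
      -- counting copies of each vertex in S
      set cnt : V → ℕ := fun v =>
        ((Finset.univ : Finset (Fin B)).filter (fun i => Sum.inl (v, i) ∈ S)).card with hcnt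
      set W₀ : Finset V := Finset.univ.filter (fun v => B - w ≤ cnt v) with hW₀
      have hWcount : W₀.card * (B - w) ≤ S.card := by
        have hstep1 : W₀.card * (B - w) ≤ ∑ v ∈ W₀, cnt v := by
          calc W₀.card * (B - w) = ∑ _v ∈ W₀, (B - w) := by
                rw [Finset.sum_const, smul_eq_mul]
          _ ≤ ∑ v ∈ W₀, cnt v :=
            Finset.sum_le_sum (fun v hv => (Finset.mem_filter.1 hv).2)
        have hstep2 : ∑ v ∈ W₀, cnt v ≤ ∑ v : V, cnt v :=
          Finset.sum_le_sum_of_subset (Finset.subset_univ _)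
        have hstep3 : ∑ v : V, cnt v ≤ S.card := by
          set SL : Finset (V × Fin B) :=
            Finset.univ.filter (fun p : V × Fin B => Sum.inl p ∈ S) with hSL
          have hfib : SL.card = ∑ v : V, (SL.filter (fun p => p.1 = v)).card :=
            Finset.card_eq_sum_card_fiberwise (fun p _ => Finset.mem_univ p.1)
          have hfib2 : ∀ v : V, (SL.filter (fun p => p.1 = v)).card = cnt v := by
            intro v
            refine Finset.card_bij' (fun p _ => p.2) (fun i _ => (v, i)) ?_ ?_ ?_ ?_
            · intro p hp
              simp only [hSL, Finset.mem_filter, Finset.mem_univ, true_and] at hp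
              simp only [Finset.mem_filter, Finset.mem_univ, true_and]
              rw [show (v, p.2) = p from Prod.ext hp.2.symm rfl]
              exact hp.1
            · intro i hi
              simp only [Finset.mem_filter, Finset.mem_univ, true_and] at hi
              simp only [hSL, Finset.mem_filter, Finset.mem_univ, true_and, and_true]
              exact hi
            · intro p hp
              simp only [hSL, Finset.mem_filter] at hp
              exact Prod.ext hp.2.symm rfl
            · intro i _
              rfl
          have hSLcard : SL.card ≤ S.card := by
            refine Finset.card_le_card_of_injOn (fun p => Sum.inl p) ?_ ?_
            · intro p hp
              rw [Finset.mem_coe] at hp ⊢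
              simp only [hSL, Finset.mem_filter, Finset.mem_univ, true_and] at hp
              exact hp
            · intro p _ q _ hpq
              exact Sum.inl.inj hpq
          calc ∑ v : V, cnt v = SL.card := by rw [hfib]; exact Finset.sum_congr rfl (fun v _ => (hfib2 v).symm)
          _ ≤ S.card := hSLcard
        omega
      have hWcov : ∀ e ∈ E, ∃ v ∈ e, v ∈ W₀ := by
        intro e he
        by_contra hecov
        push_neg at hecov
        obtain ⟨v₀, hv₀⟩ := heNe e he
        have havail : ∀ v ∈ e, k ≤ ((Finset.univ : Finset (Fin B)).filter
            (fun i => Sum.inl (v, i) ∉ S)).card := by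
          intro v hv
          have h1 : ¬ (B - w ≤ cnt v) := by
            have := hecov v hv
            rw [hW₀, Finset.mem_filter] at this
            simpa using this
          have h2 : cnt v + ((Finset.univ : Finset (Fin B)).filter
              (fun i => Sum.inl (v, i) ∉ S)).card = B := by
            have h3 := Finset.card_filter_add_card_filter_not
              (s := (Finset.univ : Finset (Fin B))) (p := fun i => Sum.inl (v, i) ∈ S)
            rw [Finset.card_univ, Fintype.card_fin] at h3
            rw [hcnt]
            simpa using h3
          omega
        obtain ⟨i₀, hi₀⟩ : ∃ i₀ : Fin 2, ∀ u, χ u = i₀ → T.degree u ≤ Δ := by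
          rcases le_total ((Finset.univ.filter fun v => χ v = 0).sup (fun v => T.degree v))
            ((Finset.univ.filter fun v => χ v = 1).sup (fun v => T.degree v)) with hle | hle
          · refine ⟨0, fun u hu => ?_⟩
            have h4 := Finset.le_sup (s := Finset.univ.filter fun v => χ v = 0)
              (f := fun v => T.degree v)
              (Finset.mem_filter.2 ⟨Finset.mem_univ u, hu⟩)
            rw [hΔdef]
            exact le_trans h4 (le_of_eq (min_eq_left hle).symm)
          · refine ⟨1, fun u hu => ?_⟩
            have h4 := Finset.le_sup (s := Finset.univ.filter fun v => χ v = 1)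
              (f := fun v => T.degree v)
              (Finset.mem_filter.2 ⟨Finset.mem_univ u, hu⟩)
            rw [hΔdef]
            exact le_trans h4 (le_of_eq (min_eq_right hle).symm)
        obtain ⟨ψ, hψmem, hψinj⟩ := exists_good_assignment Δ e (by omega)
          (le_of_eq (hunif e he).symm)
          k α T inferInstance (by rw [Nat.card_eq_fintype_card, hk]) htree χ i₀ hχ
          (fun u hu s hs => le_trans (Finset.card_le_card
            (by intro x hx
                rw [SimpleGraph.mem_neighborFinset]
                exact hs x hx)) (hi₀ u hu))
        have hchoice : ∀ v : V, ∃ g : α → Fin B,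
            (∀ x y, ψ x = v → ψ y = v → g x = g y → x = y) ∧
            (∀ x, ψ x = v → Sum.inl (v, g x) ∉ S) := by
          intro v
          by_cases hv : v ∈ e
          · obtain ⟨g, hg1, hg2⟩ := exists_injOn_finset (⟨⟨0, hBpos⟩⟩ : Nonempty (Fin B))
              (Finset.univ.filter (fun x : α => ψ x = v))
              ((Finset.univ : Finset (Fin B)).filter (fun i => Sum.inl (v, i) ∉ S))
              (le_trans (le_trans (Finset.card_filter_le _ _)
                (le_of_eq (by rw [Finset.card_univ, hk]))) (havail v hv))
            refine ⟨g, ?_, ?_⟩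
            · intro x y hx hy hxy
              exact hg1 x (Finset.mem_filter.2 ⟨Finset.mem_univ _, hx⟩)
                y (Finset.mem_filter.2 ⟨Finset.mem_univ _, hy⟩) hxy
            · intro x hx
              have h5 := hg2 x (Finset.mem_filter.2 ⟨Finset.mem_univ _, hx⟩)
              exact (Finset.mem_filter.1 h5).2
          · refine ⟨fun _ => ⟨0, hBpos⟩, ?_, ?_⟩
            · intro x y hx _ _
              exact absurd (hx ▸ hψmem x) hv
            · intro x hx
              exact absurd (hx ▸ hψmem x) hv
        choose ιv hιv1 hιv2 using hchoice
        set ι : α → Fin B := fun x => ιv (ψ x) x with hι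
        have hιinj : ∀ x y, ψ x = ψ y → ι x = ι y → x = y := by
          intro x y hxy hi
          rw [hι] at hi
          dsimp only at hi
          rw [← hxy] at hi
          exact hιv1 (ψ x) x y rfl hxy.symm hi
        have hιS : ∀ x, Sum.inl (ψ x, ι x) ∉ S := fun x => hιv2 (ψ x) x rfl
        set goodJ : Finset (Fin C) := Finset.univ.filter
          (fun j : Fin C => ∀ ec : Q, Sum.inr (ec, j) ∉ S) with hgoodJ
        have hgood : k ≤ goodJ.card := by
          set badJ : Finset (Fin C) := Finset.univ.filter
            (fun j : Fin C => ∃ ec : Q, Sum.inr (ec, j) ∈ S) with hbadJ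
          have hb : badJ.card ≤ S.card := by
            refine Finset.card_le_card_of_injOn
              (fun j => if h : ∃ ec : Q, Sum.inr (ec, j) ∈ S then Sum.inr (h.choose, j)
                else Sum.inl (v₀, ⟨0, hBpos⟩)) ?_ ?_
            · intro j hj
              rw [Finset.mem_coe, hbadJ, Finset.mem_filter] at hj
              dsimp only
              rw [dif_pos hj.2]
              exact hj.2.choose_spec
            · intro j hj j' hj' hjj
              rw [Finset.mem_coe, hbadJ, Finset.mem_filter] at hj hj'
              dsimp only at hjj
              rw [dif_pos hj.2, dif_pos hj'.2] at hjj
              exact congrArg Prod.snd (Sum.inr.inj hjj)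
          have hcompl : badJ.card + goodJ.card = C := by
            have h6 := Finset.card_filter_add_card_filter_not
              (s := (Finset.univ : Finset (Fin C)))
              (p := fun j : Fin C => ∃ ec : Q, Sum.inr (ec, j) ∈ S)
            rw [Finset.card_univ, Fintype.card_fin] at h6
            rw [hbadJ, hgoodJ]
            rw [show (Finset.univ.filter (fun j : Fin C => ∀ ec : Q, Sum.inr (ec, j) ∉ S)) =
              (Finset.univ.filter (fun j : Fin C => ¬ ∃ ec : Q, Sum.inr (ec, j) ∈ S)) from
              Finset.filter_congr (fun j _ => by simp [not_exists])]
            exact h6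
          omega
        obtain ⟨ρ, hρ1, hρ2⟩ := exists_injOn_finset (⟨⟨0, hCpos⟩⟩ : Nonempty (Fin C))
          (Finset.univ : Finset α) goodJ (le_trans (le_of_eq (by rw [Finset.card_univ, hk]))
            hgood)
        set σf : α → V → Fin B := fun u v =>
          if h : ∃ x, T.Adj u x ∧ ψ x = v then ι h.choose else ⟨0, hBpos⟩ with hσf
        set E' : α → Finset (V × Fin B) := fun u => e.image (fun v => (v, σf u v)) with hE'
        have hE'card : ∀ u, (E' u).card = Δ := by
          intro u
          rw [hE']
          dsimp only
          rw [Finset.card_image_of_injective _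
            (fun a b hab => congrArg Prod.fst hab), hunif e he]
        have hE'img : ∀ u, (E' u).image Prod.fst ∈ E := by
          intro u
          rw [hE']
          dsimp only
          rw [Finset.image_image]
          have h7 : (Prod.fst ∘ fun v => (v, σf u v)) = id := rfl
          rw [h7, Finset.image_id]
          exact he
        have hE'mem : ∀ u x, χ u = i₀ → T.Adj u x → (ψ x, ι x) ∈ E' u := by
          intro u x hu hadj
          have hex : ∃ z, T.Adj u z ∧ ψ z = ψ x := ⟨x, hadj, rfl⟩
          have hσ : σf u (ψ x) = ι x := by
            rw [hσf]
            dsimp only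
            rw [dif_pos hex]
            have hspec := hex.choose_spec
            have hcx : hex.choose = x := hψinj u hex.choose x hu hspec.1 hadj hspec.2
            rw [hcx]
          rw [hE']
          dsimp only
          exact Finset.mem_image.2 ⟨ψ x, hψmem x, by rw [hσ]⟩
        set F : α → (V × Fin B) ⊕ Q × Fin C := fun x =>
          if hx : χ x = i₀ then Sum.inr (⟨E' x, hE'card x, hE'img x⟩, ρ x)
          else Sum.inl (ψ x, ι x) with hF
        have hFinj : Function.Injective F := by
          intro x y hxy
          rw [hF] at hxy
          dsimp only at hxy
          by_cases hx : χ x = i₀ <;> by_cases hy : χ y = i₀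
          · rw [dif_pos hx, dif_pos hy] at hxy
            have h8 := Sum.inr.inj hxy
            have h9 : ρ x = ρ y := congrArg Prod.snd h8
            exact hρ1 x (Finset.mem_univ x) y (Finset.mem_univ y) h9
          · rw [dif_pos hx, dif_neg hy] at hxy; simp at hxy
          · rw [dif_neg hx, dif_pos hy] at hxy; simp at hxy
          · rw [dif_neg hx, dif_neg hy] at hxy
            have h8 := Sum.inl.inj hxy
            exact hιinj x y (congrArg Prod.fst h8) (congrArg Prod.snd h8)
        have hFhom : ∀ x y, T.Adj x y → G.Adj (F x) (F y) := by
          intro x y hadj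
          have hne := hχ x y hadj
          have haux : ∀ a b i : Fin 2, a ≠ b → a ≠ i → b = i := by decide
          rw [hG, incidenceGraph_adj]
          by_cases hx : χ x = i₀
          · have hy : χ y ≠ i₀ := fun h => hne (hx.trans h.symm)
            refine Or.inr ⟨(ψ y, ι y), (⟨E' x, hE'card x, hE'img x⟩, ρ x), ?_, ?_, ?_⟩
            · rw [hF]; dsimp only; rw [dif_pos hx]
            · rw [hF]; dsimp only; rw [dif_neg hy]
            · exact hE'mem x y hx hadj
          · have hy : χ y = i₀ := haux (χ x) (χ y) i₀ hne hx
            refine Or.inl ⟨(ψ x, ι x), (⟨E' y, hE'card y, hE'img y⟩, ρ y), ?_, ?_, ?_⟩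
            · rw [hF]; dsimp only; rw [dif_neg hx]
            · rw [hF]; dsimp only; rw [dif_pos hy]
            · exact hE'mem y x hy hadj.symm
        obtain ⟨u, hu⟩ := hStrans F hFinj hFhom
        rw [Finset.mem_coe] at hu
        by_cases hcu : χ u = i₀
        · rw [hF] at hu
          dsimp only at hu
          rw [dif_pos hcu] at hu
          have h10 := hρ2 u (Finset.mem_univ u)
          rw [hgoodJ, Finset.mem_filter] at h10
          exact h10.2 _ hu
        · rw [hF] at hu
          dsimp only at hu
          rw [dif_neg hcu] at hu
          exact hιS u hu
      have hτW : sInf τset ≤ W₀.card := Nat.sInf_le ⟨W₀, hWcov, rfl⟩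
      have : sInf τset * (B - w) ≤ S.card :=
        le_trans (Nat.mul_le_mul_right _ hτW) hWcount
      omega
  · -- UPPER BOUND
    set Sup : Finset ((V × Fin B) ⊕ Q × Fin C) :=
      (S₀ ×ˢ (Finset.univ : Finset (Fin B))).map ⟨Sum.inl, Sum.inl_injective⟩ with hSup
    have hSupcard : Sup.card = sInf τset * B := by
      rw [hSup, Finset.card_map, Finset.card_product, hS₀card, Finset.card_univ,
        Fintype.card_fin]
    have htrans : IsTTransversal T G ↑Sup := by
      intro f hfinj hfhom
      by_contra hcc
      push_neg at hcc
      have hside : ∀ {x y : α} (p : T.Walk x y), ((f x).isLeft = (f y).isLeft ↔ χ x = χ y) := by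
        intro x y p
        induction p with
        | nil => simp
        | @cons x z y hadj q IH =>
          have h1 : (f x).isLeft ≠ (f z).isLeft := by
            have hA := hfhom _ _ hadj
            rw [hG, incidenceGraph_adj] at hA
            rcases hA with ⟨a, b, ha, hb, _⟩ | ⟨a, b, ha, hb, _⟩ <;> rw [ha, hb] <;> simp
          have h2 : χ x ≠ χ z := hχ _ _ hadj
          have aux1 : ∀ (a b c : Bool), a ≠ b → ((a = c) ↔ ¬ (b = c)) := by decide
          have aux2 : ∀ (a b c : Fin 2), a ≠ b → ((a = c) ↔ ¬ (b = c)) := by decide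
          rw [aux1 _ _ _ h1, aux2 _ _ _ h2, IH]
      obtain ⟨p01⟩ := htree.isConnected.preconnected u₀ u₁
      have hss : (f u₀).isLeft ≠ (f u₁).isLeft := by
        intro h
        have := (hside p01).1 h
        rw [hu₀χ, hu₁χ] at this
        exact absurd this (by decide)
      obtain ⟨us, hud, ec, j, hfu⟩ :
          ∃ u, Δ ≤ T.degree u ∧ ∃ (ec : Q) (j : Fin C), f u = Sum.inr (ec, j) := by
        cases hf0 : f u₀ with
        | inl p =>
          cases hf1 : f u₁ with
          | inl p' => rw [hf0, hf1] at hss; simp at hss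
          | inr q => exact ⟨u₁, hu₁d, q.1, q.2, by rw [hf1]⟩
        | inr q => exact ⟨u₀, hu₀d, q.1, q.2, by rw [hf0]⟩
      have hsub : (T.neighborFinset us).image f ⊆ ec.1.image Sum.inl := by
        intro z hz
        obtain ⟨x, hx, rfl⟩ := Finset.mem_image.1 hz
        have hadj : T.Adj us x := by simpa using hx
        have hA := hfhom _ _ hadj
        rw [hG, incidenceGraph_adj] at hA
        rcases hA with ⟨a, b, ha, hb, _⟩ | ⟨a, b, ha, hb, hm⟩
        · rw [hfu] at ha; simp at ha
        · rw [hfu] at ha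
          have hbec : b = (ec, j) := (Sum.inr.inj ha).symm
          rw [hbec] at hm
          exact Finset.mem_image.2 ⟨a, hm, hb.symm⟩
      have hcard1 : (ec.1.image (Sum.inl : V × Fin B → (V × Fin B) ⊕ Q × Fin C)).card = Δ := by
        rw [Finset.card_image_of_injective _ Sum.inl_injective]; exact ec.2.1
      have hcard2 : Δ ≤ ((T.neighborFinset us).image f).card := by
        rw [Finset.card_image_of_injective _ hfinj]; exact hud
      have heq2 : (T.neighborFinset us).image f = ec.1.image Sum.inl :=
        Finset.eq_of_subset_of_card_le hsub (by omega)
      obtain ⟨vv, hvv, hvvS₀⟩ := hS₀cov _ ec.2.2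
      obtain ⟨pr, hpr, hprv⟩ := Finset.mem_image.1 hvv
      have hmem2 : Sum.inl pr ∈ (T.neighborFinset us).image f := by
        rw [heq2]; exact Finset.mem_image.2 ⟨pr, hpr, rfl⟩
      obtain ⟨x, _, hfx⟩ := Finset.mem_image.1 hmem2
      apply hcc x
      rw [Finset.mem_coe, hSup, Finset.mem_map]
      refine ⟨pr, Finset.mem_product.2 ⟨?_, Finset.mem_univ _⟩, hfx.symm⟩
      rw [hprv]; exact hvvS₀
    refine le_trans (Nat.sInf_le ?_) (le_of_eq hSupcard)
    exact ⟨Sup, htrans, rfl⟩
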